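/- Suppose the period τ is even. Then ∏_{m=0}^{τ−1} (√N + P_{m+1})/Q_{m+1} = p_{τ−1} + q_{τ−1}√N. Consequently, setting γ = ∏_{m=0}^{τ−1} (√N + P_{m+1}) and γ̄ = ∏_{m=0}^{τ−1} (−√N + P_{m+1}), one has γ/γ̄ = (p_{τ−1} + q_{τ−1}√N)². -/

import Mathlib

set_option maxHeartbeats 1600000 in
theorem stmt_12
    (N : ℕ) (hN : 0 < N) (hNsq : ¬ IsSquare N)
    (a P Q : ℤ → ℤ)
    (hP0 : P 0 = 0) (hQ0 : Q 0 = 1)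
    (ha : ∀ m : ℤ, 0 ≤ m → a m = ⌊((P m : ℝ) + Real.sqrt N) / (Q m : ℝ)⌋)
    (hPrec : ∀ m : ℤ, 0 ≤ m → P (m + 1) = a m * Q m - P m)
    (hQrec : ∀ m : ℤ, 0 ≤ m → Q (m + 1) * Q m = (N : ℤ) - P (m + 1) ^ 2)
    (τ : ℕ) (hτ : 0 < τ)
    (hper : ∀ n : ℤ, 1 ≤ n → a (n + τ) = a n)
    (hmin : ∀ τ' : ℕ, 0 < τ' → (∀ n : ℤ, 1 ≤ n → a (n + τ') = a n) → τ ≤ τ')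
    (p q : ℤ → ℤ)
    (hp1 : p (-1) = 1) (hp0 : p 0 = a 0)
    (hq1 : q (-1) = 0) (hq0 : q 0 = 1)
    (hprec : ∀ m : ℤ, 1 ≤ m → p m = a m * p (m - 1) + p (m - 2))
    (hqrec : ∀ m : ℤ, 1 ≤ m → q m = a m * q (m - 1) + q (m - 2))
    (hτeven : Even τ)
    :
    (∏ m ∈ Finset.range τ,
        (Real.sqrt N + (P ((m : ℤ) + 1) : ℝ)) / (Q ((m : ℤ) + 1) : ℝ))
        = (p ((τ : ℤ) - 1) : ℝ) + (q ((τ : ℤ) - 1) : ℝ) * Real.sqrt N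
      ∧ (∏ m ∈ Finset.range τ, (Real.sqrt N + (P ((m : ℤ) + 1) : ℝ)))
          / (∏ m ∈ Finset.range τ, (-Real.sqrt N + (P ((m : ℤ) + 1) : ℝ)))
        = ((p ((τ : ℤ) - 1) : ℝ) + (q ((τ : ℤ) - 1) : ℝ) * Real.sqrt N) ^ 2 := by
  classical
  set s : ℝ := Real.sqrt N with hs_def
  have hNR : (1:ℝ) ≤ (N:ℝ) := by exact_mod_cast hN
  have hsq : s ^ 2 = (N:ℝ) := Real.sq_sqrt (by positivity)
  have hs0 : (0:ℝ) < s := Real.sqrt_pos.mpr (by positivity)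
  have hirr : Irrational s := irrational_sqrt_natCast_iff.mpr hNsq
  have hN1 : N ≠ 1 := by rintro rfl; exact hNsq ⟨1, rfl⟩
  have hN2 : (2:ℝ) ≤ (N:ℝ) := by
    have : 2 ≤ N := by omega
    exact_mod_cast this
  have hs1 : 1 < s := by nlinarith
  -- cast versions of the recurrences
  have hQC : ∀ m : ℤ, 0 ≤ m →
      (Q (m+1):ℝ) * (Q m:ℝ) = (N:ℝ) - (P (m+1):ℝ)^2 := by
    intro m hm; exact_mod_cast hQrec m hm
  have hPC : ∀ m : ℤ, 0 ≤ m →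
      (P (m+1):ℝ) = (a m:ℝ) * (Q m:ℝ) - (P m:ℝ) := by
    intro m hm; exact_mod_cast hPrec m hm
  have hkey : ∀ m : ℤ, 0 ≤ m →
      (s - (P (m+1):ℝ)) * (s + (P (m+1):ℝ)) = (Q (m+1):ℝ) * (Q m:ℝ) := by
    intro m hm
    have h := hQC m hm
    linear_combination hsq - h
  -- one step of the invariant
  have step : ∀ m : ℤ, 0 ≤ m →
      (0 < Q m ∧ (P m:ℝ) < s ∧ (Q m:ℝ) < s + (P m:ℝ)) →
      (1 ≤ a m ∧ (0:ℝ) < s - (P (m+1):ℝ) ∧ (s - (P (m+1):ℝ)) < (Q m:ℝ) ∧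
        0 < Q (m+1) ∧ (P (m+1):ℝ) < s ∧ (Q (m+1):ℝ) < s + (P (m+1):ℝ)) := by
    intro m hm h
    obtain ⟨hQ, hP, hQx⟩ := h
    have hQR : (0:ℝ) < (Q m:ℝ) := by exact_mod_cast hQ
    have hxgt1 : 1 < (s + (P m:ℝ)) / (Q m:ℝ) := (one_lt_div hQR).mpr hQx
    have hfloor : a m = ⌊(s + (P m:ℝ)) / (Q m:ℝ)⌋ := by
      rw [ha m hm]; congr 1; ring
    have hxirr : Irrational ((s + (P m:ℝ)) / (Q m:ℝ)) := by
      have h1 : Irrational (s + (P m:ℝ)) := hirr.add_intCast (P m)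
      exact h1.div_intCast (by exact_mod_cast hQ.ne')
    have ha1 : 1 ≤ a m := by
      rw [hfloor]; exact Int.le_floor.mpr (by push_cast; linarith)
    have hfl : ((a m:ℝ)) < (s + (P m:ℝ)) / (Q m:ℝ) :=
      lt_of_le_of_ne (by rw [hfloor]; exact Int.floor_le _) (Ne.symm (hxirr.ne_int (a m)))
    have hfu : (s + (P m:ℝ)) / (Q m:ℝ) < (a m:ℝ) + 1 := by
      rw [hfloor]; exact Int.lt_floor_add_one _
    have e1 : s - (P (m+1):ℝ) = ((s + (P m:ℝ)) / (Q m:ℝ) - (a m:ℝ)) * (Q m:ℝ) := by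
      rw [hPC m hm]; field_simp; ring
    have hfr0 : (0:ℝ) < s - (P (m+1):ℝ) := by
      rw [e1]; exact mul_pos (by linarith) hQR
    have hfr1 : s - (P (m+1):ℝ) < (Q m:ℝ) := by
      rw [e1]
      have := mul_lt_mul_of_pos_right (show (s + (P m:ℝ)) / (Q m:ℝ) - (a m:ℝ) < 1 by linarith) hQR
      linarith
    have haR : (1:ℝ) ≤ (a m:ℝ) := by exact_mod_cast ha1
    have hsP' : (0:ℝ) < s + (P (m+1):ℝ) := by linarith
    have hk := hkey m hm
    have hQ'R : (0:ℝ) < (Q (m+1):ℝ) := by nlinarith [mul_pos hfr0 hsP']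
    have hQ'pos : 0 < Q (m+1) := by exact_mod_cast hQ'R
    have hQ'lt : (Q (m+1):ℝ) < s + (P (m+1):ℝ) := by
      nlinarith [mul_lt_mul_of_pos_left hfr1 hsP']
    exact ⟨ha1, hfr0, hfr1, hQ'pos, by linarith, hQ'lt⟩
  -- the invariant
  have Inv : ∀ m : ℤ, 0 ≤ m → (0 < Q m ∧ (P m:ℝ) < s ∧ (Q m:ℝ) < s + (P m:ℝ)) := by
    intro m hm
    refine Int.le_induction
      (motive := fun k _ => 0 < Q k ∧ (P k:ℝ) < s ∧ (Q k:ℝ) < s + (P k:ℝ)) ?_ ?_ m hm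
    · refine ⟨by rw [hQ0]; norm_num, ?_, ?_⟩
      · rw [hP0]; push_cast; linarith
      · rw [hP0, hQ0]; push_cast; linarith
    · intro n hn ih
      obtain ⟨_, _, _, h4, h5, h6⟩ := step n hn ih
      exact ⟨h4, h5, h6⟩
  have hQpos : ∀ m : ℤ, 0 ≤ m → 0 < Q m := fun m hm => (Inv m hm).1
  have hQRpos : ∀ m : ℤ, 0 ≤ m → (0:ℝ) < (Q m:ℝ) := fun m hm => by
    exact_mod_cast hQpos m hm
  have hPlt : ∀ m : ℤ, 0 ≤ m → (P m:ℝ) < s := fun m hm => (Inv m hm).2.1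
  have hQlt : ∀ m : ℤ, 0 ≤ m → (Q m:ℝ) < s + (P m:ℝ) := fun m hm => (Inv m hm).2.2
  have ha1 : ∀ m : ℤ, 0 ≤ m → 1 ≤ a m := fun m hm => (step m hm (Inv m hm)).1
  have hxgt1 : ∀ m : ℤ, 0 ≤ m → 1 < (s + (P m:ℝ)) / (Q m:ℝ) :=
    fun m hm => (one_lt_div (hQRpos m hm)).mpr (hQlt m hm)
  have hxpos : ∀ m : ℤ, 0 ≤ m → 0 < (s + (P m:ℝ)) / (Q m:ℝ) :=
    fun m hm => lt_trans one_pos (hxgt1 m hm)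
  have hxle : ∀ m : ℤ, 0 ≤ m → (s + (P m:ℝ)) / (Q m:ℝ) ≤ 2*s := by
    intro m hm
    have h1 : (1:ℝ) ≤ (Q m:ℝ) := by exact_mod_cast hQpos m hm
    have h2 : (0:ℝ) < s + (P m:ℝ) := by
      have := hQlt m hm; have := hQRpos m hm; linarith
    have h3 := div_le_self h2.le h1
    have := hPlt m hm
    linarith
  -- the step identity for complete quotients, for r = ± s
  have hxstepG : ∀ r : ℝ, r ^ 2 = (N:ℝ) → ∀ m : ℤ, 0 ≤ m →
      ((r + (P m:ℝ))/(Q m:ℝ) - (a m:ℝ)) * ((r + (P (m+1):ℝ))/(Q (m+1):ℝ)) = 1 := by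
    intro r hr m hm
    have hQ1 : (Q m:ℝ) ≠ 0 := (hQRpos m hm).ne'
    have hQ2 : (Q (m+1):ℝ) ≠ 0 := (hQRpos (m+1) (by omega)).ne'
    have e1 : (r + (P m:ℝ))/(Q m:ℝ) - (a m:ℝ) = (r - (P (m+1):ℝ))/(Q m:ℝ) := by
      rw [hPC m hm]; field_simp; ring
    rw [e1, div_mul_div_comm, div_eq_one_iff_eq (by exact mul_ne_zero hQ1 hQ2)]
    have h := hQC m hm
    linear_combination hr - h
  have hxstep := hxstepG s hsq
  -- theta recurrence
  have hthrec : ∀ m : ℤ, 1 ≤ m → ∀ r : ℝ,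
      (q m:ℝ)*r - (p m:ℝ) =
        (a m:ℝ)*((q (m-1):ℝ)*r - (p (m-1):ℝ)) + ((q (m-2):ℝ)*r - (p (m-2):ℝ)) := by
    intro m hm r
    have h1 : (p m:ℝ) = (a m:ℝ) * (p (m-1):ℝ) + (p (m-2):ℝ) := by
      exact_mod_cast hprec m hm
    have h2 : (q m:ℝ) = (a m:ℝ) * (q (m-1):ℝ) + (q (m-2):ℝ) := by
      exact_mod_cast hqrec m hm
    rw [h1, h2]; ring
  -- the theta link
  have KG : ∀ r : ℝ, r ^ 2 = (N:ℝ) → ∀ m : ℤ, 0 ≤ m →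
      ((r + (P (m+1):ℝ))/(Q (m+1):ℝ)) * ((q m:ℝ)*r - (p m:ℝ))
        = -((q (m-1):ℝ)*r - (p (m-1):ℝ)) := by
    intro r hr m hm
    refine Int.le_induction
      (motive := fun k _ => ((r + (P (k+1):ℝ))/(Q (k+1):ℝ)) * ((q k:ℝ)*r - (p k:ℝ))
        = -((q (k-1):ℝ)*r - (p (k-1):ℝ))) ?_ ?_ m hm
    · have h := hxstepG r hr 0 le_rfl
      rw [hP0, hQ0] at h
      push_cast at h
      norm_num at h ⊢
      rw [hp0, hq0, hq1, hp1]
      push_cast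
      linear_combination h
    · intro n hn IH
      have hrec := hthrec (n+1) (by omega) r
      rw [show (n:ℤ)+1-1 = n from by ring, show (n:ℤ)+1-2 = n-1 from by ring] at hrec
      have hstep := hxstepG r hr (n+1) (by omega)
      rw [show (n:ℤ)+1-1 = n from by ring]
      linear_combination ((r + (P (n+1+1):ℝ))/(Q (n+1+1):ℝ)) * hrec
        + ((r + (P (n+1+1):ℝ))/(Q (n+1+1):ℝ)) * IH
        - ((q n:ℝ)*r - (p n:ℝ)) * hstep
  -- telescoping product
  have TG : ∀ r : ℝ, r ^ 2 = (N:ℝ) → ∀ n : ℕ,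
      (∏ m ∈ Finset.range n, ((r + (P ((m:ℤ)+1):ℝ))/(Q ((m:ℤ)+1):ℝ)))
        * ((q ((n:ℤ)-1):ℝ)*r - (p ((n:ℤ)-1):ℝ)) = (-1)^(n+1) := by
    intro r hr n
    induction n with
    | zero => simp [hp1, hq1]
    | succ n ihn =>
      rw [Finset.prod_range_succ]
      have hK := KG r hr (n:ℤ) (by positivity)
      push_cast
      rw [show ((n:ℤ))+1-1 = (n:ℤ) from by ring]
      linear_combination
        (∏ m ∈ Finset.range n, ((r + (P ((m:ℤ)+1):ℝ))/(Q ((m:ℤ)+1):ℝ))) * hK + (-1) * ihn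
  -- telescoping product of the pair
  have TQ : ∀ n : ℕ,
      (∏ m ∈ Finset.range n, (((s + (P ((m:ℤ)+1):ℝ))/(Q ((m:ℤ)+1):ℝ))
          * ((-s + (P ((m:ℤ)+1):ℝ))/(Q ((m:ℤ)+1):ℝ)))) * ((Q (n:ℤ)):ℝ) = (-1)^n := by
    intro n
    induction n with
    | zero => simp [hQ0]
    | succ n ihn =>
      rw [Finset.prod_range_succ]
      have hk := hkey (n:ℤ) (by positivity)
      have hQ2 : (Q ((n:ℤ)+1):ℝ) ≠ 0 := (hQRpos ((n:ℤ)+1) (by positivity)).ne'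
      have hfac : ((s + (P ((n:ℤ)+1):ℝ))/(Q ((n:ℤ)+1):ℝ))
          * ((-s + (P ((n:ℤ)+1):ℝ))/(Q ((n:ℤ)+1):ℝ)) * ((Q ((n:ℤ)+1)):ℝ)
          = -((Q (n:ℤ)):ℝ) := by
        field_simp
        linear_combination -hk
      push_cast
      linear_combination
        (∏ m ∈ Finset.range n, (((s + (P ((m:ℤ)+1):ℝ))/(Q ((m:ℤ)+1):ℝ))
          * ((-s + (P ((m:ℤ)+1):ℝ))/(Q ((m:ℤ)+1):ℝ)))) * hfac - ihn
  -- lower bound on complete quotients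
  have hxlb : ∀ m : ℤ, 0 ≤ m → 1 + 1/(2*s) ≤ (s + (P m:ℝ)) / (Q m:ℝ) := by
    intro m hm
    have h := hxstep m hm
    have hx1pos : 0 < (s + (P (m+1):ℝ))/(Q (m+1):ℝ) := hxpos (m+1) (by omega)
    have e : (s + (P m:ℝ))/(Q m:ℝ) - (a m:ℝ) = 1 / ((s + (P (m+1):ℝ))/(Q (m+1):ℝ)) :=
      eq_div_of_mul_eq hx1pos.ne' h
    have h2 : 1/(2*s) ≤ 1 / ((s + (P (m+1):ℝ))/(Q (m+1):ℝ)) :=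
      one_div_le_one_div_of_le hx1pos (hxle (m+1) (by omega))
    have haR : (1:ℝ) ≤ (a m:ℝ) := by exact_mod_cast ha1 m hm
    linarith [e ▸ h2]
  -- contraction step
  have hcontr : ∀ k : ℤ, 1 ≤ k →
      ((s + (P (k+1):ℝ))/(Q (k+1):ℝ)) * ((s + (P (k+τ+1):ℝ))/(Q (k+τ+1):ℝ)) *
        (((s + (P k:ℝ))/(Q k:ℝ)) - ((s + (P (k+τ):ℝ))/(Q (k+τ):ℝ)))
      = ((s + (P (k+τ+1):ℝ))/(Q (k+τ+1):ℝ)) - ((s + (P (k+1):ℝ))/(Q (k+1):ℝ)) := by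
    intro k hk
    have h1 := hxstep k (by omega)
    have h2 := hxstep (k+τ) (by omega)
    rw [hper k hk] at h2
    linear_combination ((s + (P (k+τ+1):ℝ))/(Q (k+τ+1):ℝ)) * h1
      - ((s + (P (k+1):ℝ))/(Q (k+1):ℝ)) * h2
  -- growth of the difference
  have grow : ∀ n : ℕ,
      (1 + 1/(2*s))^(2*n) *
        |((s + (P 1:ℝ))/(Q 1:ℝ)) - ((s + (P (1+τ):ℝ))/(Q (1+τ):ℝ))|
      ≤ |((s + (P (1+(n:ℤ)):ℝ))/(Q (1+(n:ℤ)):ℝ))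
          - ((s + (P (1+(n:ℤ)+τ):ℝ))/(Q (1+(n:ℤ)+τ):ℝ))| := by
    intro n
    induction n with
    | zero => norm_num
    | succ n ihn =>
      have hA : 1 + 1/(2*s) ≤ (s + (P (1+((n:ℤ)+1)):ℝ))/(Q (1+((n:ℤ)+1)):ℝ) :=
        hxlb (1+((n:ℤ)+1)) (by omega)
      have hB : 1 + 1/(2*s) ≤ (s + (P (1+((n:ℤ)+1)+τ):ℝ))/(Q (1+((n:ℤ)+1)+τ):ℝ) :=
        hxlb (1+((n:ℤ)+1)+τ) (by omega)
      have hcpos : (0:ℝ) < 1 + 1/(2*s) := by positivity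
      have hkk := hcontr (1+(n:ℤ)) (by omega)
      rw [show (1:ℤ)+(n:ℤ)+1 = 1+((n:ℤ)+1) from by ring,
        show (1:ℤ)+(n:ℤ)+(τ:ℤ)+1 = 1+((n:ℤ)+1)+(τ:ℤ) from by ring] at hkk
      have habs : ((s + (P (1+((n:ℤ)+1)):ℝ))/(Q (1+((n:ℤ)+1)):ℝ))
            * ((s + (P (1+((n:ℤ)+1)+τ):ℝ))/(Q (1+((n:ℤ)+1)+τ):ℝ))
            * |((s + (P (1+(n:ℤ)):ℝ))/(Q (1+(n:ℤ)):ℝ))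
                - ((s + (P (1+(n:ℤ)+τ):ℝ))/(Q (1+(n:ℤ)+τ):ℝ))|
          = |((s + (P (1+((n:ℤ)+1)):ℝ))/(Q (1+((n:ℤ)+1)):ℝ))
                - ((s + (P (1+((n:ℤ)+1)+τ):ℝ))/(Q (1+((n:ℤ)+1)+τ):ℝ))| := by
        have h1 : 0 < (s + (P (1+((n:ℤ)+1)):ℝ))/(Q (1+((n:ℤ)+1)):ℝ) := hxpos _ (by omega)
        have h2 : 0 < (s + (P (1+((n:ℤ)+1)+τ):ℝ))/(Q (1+((n:ℤ)+1)+τ):ℝ) := hxpos _ (by omega)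
        rw [abs_sub_comm ((s + (P (1+((n:ℤ)+1)):ℝ))/(Q (1+((n:ℤ)+1)):ℝ))]
        rw [← hkk, abs_mul, abs_mul, abs_of_pos h1, abs_of_pos h2]
      push_cast
      rw [show 2*(n+1) = 2*n + 2 from by ring, pow_add]
      rw [← habs]
      have hnn : (0:ℝ) ≤ |((s + (P (1+(n:ℤ)):ℝ))/(Q (1+(n:ℤ)):ℝ))
          - ((s + (P (1+(n:ℤ)+τ):ℝ))/(Q (1+(n:ℤ)+τ):ℝ))| := abs_nonneg _
      have hd0 : (0:ℝ) ≤ |((s + (P 1:ℝ))/(Q 1:ℝ)) - ((s + (P (1+τ):ℝ))/(Q (1+τ):ℝ))| :=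
        abs_nonneg _
      nlinarith [pow_pos hcpos (2*n), mul_le_mul_of_nonneg_left ihn (sq_nonneg (1 + 1/(2*s))),
        mul_le_mul hA hB hcpos.le (by linarith)]
  -- periodicity of the complete quotients at 1
  have heq1 : (s + (P 1:ℝ))/(Q 1:ℝ) = (s + (P (1+τ):ℝ))/(Q (1+τ):ℝ) := by
    by_contra hne
    have hd : 0 < |((s + (P 1:ℝ))/(Q 1:ℝ)) - ((s + (P (1+τ):ℝ))/(Q (1+τ):ℝ))| :=
      abs_pos.mpr (sub_ne_zero.mpr hne)
    obtain ⟨n, hn⟩ := exists_nat_gt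
      (4*s*s / |((s + (P 1:ℝ))/(Q 1:ℝ)) - ((s + (P (1+τ):ℝ))/(Q (1+τ):ℝ))|)
    have h1 : 4*s*s < (n:ℝ) *
        |((s + (P 1:ℝ))/(Q 1:ℝ)) - ((s + (P (1+τ):ℝ))/(Q (1+τ):ℝ))| :=
      (div_lt_iff₀ hd).mp hn
    have hbern : 1 + (2*n:ℕ) * (1/(2*s)) ≤ (1 + 1/(2*s))^(2*n) :=
      one_add_mul_le_pow (le_trans (by norm_num : (-2:ℝ) ≤ 0) (by positivity)) (2*n)
    have hboundn : |((s + (P (1+(n:ℤ)):ℝ))/(Q (1+(n:ℤ)):ℝ))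
          - ((s + (P (1+(n:ℤ)+τ):ℝ))/(Q (1+(n:ℤ)+τ):ℝ))| ≤ 4*s := by
      have u1 : 0 < (s + (P (1+(n:ℤ)):ℝ))/(Q (1+(n:ℤ)):ℝ) := hxpos _ (by omega)
      have u2 : (s + (P (1+(n:ℤ)):ℝ))/(Q (1+(n:ℤ)):ℝ) ≤ 2*s := hxle _ (by omega)
      have v1 : 0 < (s + (P (1+(n:ℤ)+τ):ℝ))/(Q (1+(n:ℤ)+τ):ℝ) := hxpos _ (by omega)
      have v2 : (s + (P (1+(n:ℤ)+τ):ℝ))/(Q (1+(n:ℤ)+τ):ℝ) ≤ 2*s := hxle _ (by omega)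
      rw [abs_le]; constructor <;> linarith
    have hg := grow n
    have h2 : (1 + (2*n:ℕ) * (1/(2*s))) *
        |((s + (P 1:ℝ))/(Q 1:ℝ)) - ((s + (P (1+τ):ℝ))/(Q (1+τ):ℝ))| ≤ 4*s := by
      calc (1 + (2*n:ℕ) * (1/(2*s))) *
          |((s + (P 1:ℝ))/(Q 1:ℝ)) - ((s + (P (1+τ):ℝ))/(Q (1+τ):ℝ))|
          ≤ (1 + 1/(2*s))^(2*n) *
            |((s + (P 1:ℝ))/(Q 1:ℝ)) - ((s + (P (1+τ):ℝ))/(Q (1+τ):ℝ))| :=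
            mul_le_mul_of_nonneg_right hbern hd.le
        _ ≤ 4*s := le_trans hg hboundn
    push_cast at h2
    have ht : (1/(2*s)) * (2*s) = 1 := by field_simp
    have key := mul_le_mul_of_nonneg_left h2 hs0.le
    have ht3 : (2*(1/(2*s))*s) * ((n:ℝ) *
        |((s + (P 1:ℝ))/(Q 1:ℝ)) - ((s + (P (1+τ):ℝ))/(Q (1+τ):ℝ))|)
        = (n:ℝ) * |((s + (P 1:ℝ))/(Q 1:ℝ)) - ((s + (P (1+τ):ℝ))/(Q (1+τ):ℝ))| := by
      rw [show 2*(1/(2*s))*s = (1/(2*s))*(2*s) from by ring, ht, one_mul]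
    nlinarith [mul_pos hs0 hd]
  -- integer equalities
  have hQ1R : (0:ℝ) < (Q 1:ℝ) := hQRpos 1 (by omega)
  have hQ1τR : (0:ℝ) < (Q (1+τ):ℝ) := hQRpos (1+τ) (by omega)
  have hcross : (s + (P 1:ℝ)) * (Q (1+τ):ℝ) = (s + (P (1+τ):ℝ)) * (Q 1:ℝ) :=
    (div_eq_div_iff hQ1R.ne' hQ1τR.ne').mp heq1
  have hQeq : Q (1+τ) = Q 1 := by
    by_contra hne
    have h0 : ((Q (1+τ) - Q 1 : ℤ):ℝ) ≠ 0 := by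
      exact_mod_cast sub_ne_zero.mpr hne
    have : s * ((Q (1+τ) - Q 1 : ℤ):ℝ) = ((P (1+τ) * Q 1 - P 1 * Q (1+τ) : ℤ):ℝ) := by
      push_cast
      linear_combination hcross
    have hi := hirr.mul_intCast (show (Q (1+τ) - Q 1 : ℤ) ≠ 0 from sub_ne_zero.mpr hne)
    rw [this] at hi
    exact (P (1+τ) * Q 1 - P 1 * Q (1+τ)).not_irrational hi
  have hPeq : P (1+τ) = P 1 := by
    have hE : ((P (1+τ) : ℤ):ℝ) = ((P 1 : ℤ):ℝ) := by
      rw [hQeq] at hcross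
      have := mul_right_cancel₀ hQ1R.ne' hcross
      linarith
    exact_mod_cast hE
  have hQτ : Q (τ:ℤ) = 1 := by
    have e1 : Q 1 * Q 0 = (N:ℤ) - P 1 ^ 2 := by
      have := hQrec 0 le_rfl; norm_num at this; exact this
    have e2 : Q ((τ:ℤ)+1) * Q (τ:ℤ) = (N:ℤ) - P ((τ:ℤ)+1) ^ 2 := hQrec τ (by positivity)
    rw [show (τ:ℤ)+1 = 1+(τ:ℤ) from by ring] at e2
    rw [hPeq, hQeq] at e2
    rw [hQ0, mul_one] at e1
    have hQ1ne : Q 1 ≠ 0 := (hQpos 1 (by omega)).ne'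
    have : Q 1 * Q (τ:ℤ) = Q 1 * 1 := by rw [mul_one]; omega
    exact mul_left_cancel₀ hQ1ne this
  -- assembly
  have hT1 := TG s hsq τ
  have hT2 := TG (-s) (by rw [neg_pow]; simpa using hsq) τ
  have hTQ := TQ τ
  rw [hQτ] at hTQ
  rw [Finset.prod_mul_distrib] at hTQ
  have hEv : ((-1:ℝ))^τ = 1 := hτeven.neg_one_pow
  have hOd : ((-1:ℝ))^(τ+1) = -1 := by rw [pow_succ, hEv, one_mul]
  rw [hOd] at hT1 hT2
  obtain ⟨A, hAdef⟩ : ∃ x : ℝ,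
      (∏ m ∈ Finset.range τ, ((s + (P ((m:ℤ)+1):ℝ))/(Q ((m:ℤ)+1):ℝ))) = x := ⟨_, rfl⟩
  obtain ⟨B, hBdef⟩ : ∃ x : ℝ,
      (∏ m ∈ Finset.range τ, ((-s + (P ((m:ℤ)+1):ℝ))/(Q ((m:ℤ)+1):ℝ))) = x := ⟨_, rfl⟩
  obtain ⟨u, hudef⟩ : ∃ x : ℝ, ((p ((τ:ℤ)-1)):ℝ) = x := ⟨_, rfl⟩
  obtain ⟨v, hvdef⟩ : ∃ x : ℝ, ((q ((τ:ℤ)-1)):ℝ) = x := ⟨_, rfl⟩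
  rw [hAdef, hudef, hvdef] at hT1
  rw [hBdef, hudef, hvdef] at hT2
  rw [hAdef, hBdef, hEv, Int.cast_one, mul_one] at hTQ
  rw [hAdef, hudef, hvdef]
  have hT3 : A * B = 1 := hTQ
  -- hT1 : A * (v*s - u) = -1 ; hT2 : B * (v*(-s) - u) = -1
  have hpell : (u + v*s) * (u - v*s) = 1 := by
    have h12 : (A*(v*s - u)) * (B*(v*(-s) - u)) = (-1) * (-1 : ℝ) := by rw [hT1, hT2]
    linear_combination h12 - (u^2 - v^2*s^2) * hT3
  have hne : u - v*s ≠ 0 := by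
    intro h0
    rw [h0, mul_zero] at hpell
    norm_num at hpell
  have hA1 : A = u + v*s := by
    have h : A * (u - v*s) = (u + v*s) * (u - v*s) := by
      linear_combination -hT1 - hpell
    exact mul_right_cancel₀ hne h
  constructor
  · exact hA1
  · -- second part
    have hPQne : (∏ m ∈ Finset.range τ, ((Q ((m:ℤ)+1)):ℝ)) ≠ 0 :=
      Finset.prod_ne_zero_iff.mpr (fun i _ => (hQRpos ((i:ℤ)+1) (by omega)).ne')
    have hγ : (∏ m ∈ Finset.range τ, (s + (P ((m:ℤ)+1):ℝ)))
        = A * (∏ m ∈ Finset.range τ, ((Q ((m:ℤ)+1)):ℝ)) := by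
      rw [← hAdef, ← Finset.prod_mul_distrib]
      refine Finset.prod_congr rfl (fun i _ => ?_)
      rw [div_mul_cancel₀ _ ((hQRpos ((i:ℤ)+1) (by omega)).ne')]
    have hγb : (∏ m ∈ Finset.range τ, (-s + (P ((m:ℤ)+1):ℝ)))
        = B * (∏ m ∈ Finset.range τ, ((Q ((m:ℤ)+1)):ℝ)) := by
      rw [← hBdef, ← Finset.prod_mul_distrib]
      refine Finset.prod_congr rfl (fun i _ => ?_)
      rw [div_mul_cancel₀ _ ((hQRpos ((i:ℤ)+1) (by omega)).ne')]
    rw [hγ, hγb, mul_div_mul_right _ _ hPQne]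
    have hBne : B ≠ 0 := by
      intro h0; rw [h0, mul_zero] at hT3; norm_num at hT3
    rw [div_eq_iff hBne]
    linear_combination (1 + (u + v*s)*B) * hA1 - (u + v*s) * hT3
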